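/- Let $c \in \mathbb{R}^n$ with $c_1 = 0$, $L_{i,j} = \delta_{i,j+1}$, $\Delta c = c - Lc$, and let $b^F, c^F \in \mathbb{R}^m$ satisfy $b^{FT}\mathbbm{1} = 1$ and $b^{FT}c^F = 1/2$. Define $\Delta C \in \mathbb{R}^{n\times n}$ by $\Delta C_{i,j} = \Delta c_j$ if $j \le i$ and $0$ otherwise, and $\mathbf{A}^{SF} := \Delta C \otimes b^{FT}$, $\mathbf{c}^{F} := Lc \otimes \mathbbm{1} + \Delta c \otimes c^F$. Then $\mathbf{A}^{SF}\mathbf{c}^{F} = \tfrac{1}{2} c^{\times 2}$, where $c^{\times 2}$ is the entrywise square. -/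

import Mathlib

open Finset

/-- Simplifying formula `𝐀^{SF} 𝐜^{F} = ½ c^{×2}`, where
`𝐀^{SF} = ΔC ⊗ b^{F T}` and `𝐜^{F} = Lc ⊗ 𝟙 + Δc ⊗ c^F`, assuming
`c 0 = 0`, `b^{F T}𝟙 = 1` and `b^{F T}c^F = 1/2`. -/
theorem stmt13 (n m : ℕ) (c : Fin (n+1) → ℝ) (hc0 : c 0 = 0)
    (L : Matrix (Fin (n+1)) (Fin (n+1)) ℝ)
    (hL : ∀ i j, L i j = if (i : ℕ) = (j : ℕ) + 1 then 1 else 0)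
    (Δc : Fin (n+1) → ℝ) (hΔc : Δc = c - L.mulVec c)
    (bF cF : Fin m → ℝ) (hb1 : ∑ l, bF l = 1) (hbc : ∑ l, bF l * cF l = 1/2)
    (ΔC : Matrix (Fin (n+1)) (Fin (n+1)) ℝ)
    (hΔC : ∀ i j, ΔC i j = if j ≤ i then Δc j else 0)
    (ASF : Matrix (Fin (n+1)) (Fin (n+1) × Fin m) ℝ)
    (hASF : ∀ i x, ASF i x = ΔC i x.1 * bF x.2)
    (cFvec : Fin (n+1) × Fin m → ℝ)
    (hcF : ∀ x, cFvec x = L.mulVec c x.1 + Δc x.1 * cF x.2) :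
    ∀ i, ∑ x : Fin (n+1) × Fin m, ASF i x * cFvec x = (1/2) * (c i)^2 := by
  intro i
  set g := L.mulVec c with hg
  have hg0 : g 0 = 0 := by
    simp [hg, Matrix.mulVec, dotProduct, hL]
  have hgs : ∀ (k : ℕ) (h : k + 1 ≤ n), g ⟨k+1, by omega⟩ = c ⟨k, by omega⟩ := by
    intro k h
    have : g ⟨k+1, by omega⟩ = ∑ t : Fin (n+1), (if (k+1) = (t:ℕ)+1 then 1 else 0) * c t := by
      simp [hg, Matrix.mulVec, dotProduct, hL]
    rw [this, Finset.sum_eq_single (⟨k, by omega⟩ : Fin (n+1))]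
    · simp
    · intro t _ ht
      have ht' : ¬((k+1) = (t:ℕ)+1) := by
        intro hh
        exact ht (by ext; simp; omega)
      simp [ht']; intro hk; omega
    · simp
  have hΔ : ∀ j, Δc j = c j - g j := by intro j; rw [hΔc]; rfl
  have key : ∀ (k : ℕ) (h : k ≤ n),
      ∑ j ∈ univ.filter (fun j : Fin (n+1) => (j:ℕ) ≤ k), (c j^2 - g j^2)
        = (c ⟨k, by omega⟩)^2 := by
    intro k
    induction k with
    | zero =>
      intro h
      have hset : univ.filter (fun j : Fin (n+1) => (j:ℕ) ≤ 0) = {0} := by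
        ext j; simp only [mem_filter, mem_univ, true_and, mem_singleton, Fin.ext_iff, Fin.val_zero, Nat.le_zero]
      rw [hset]
      simp [hg0, hc0]
    | succ k ih =>
      intro h
      have hset : univ.filter (fun j : Fin (n+1) => (j:ℕ) ≤ k+1)
          = insert (⟨k+1, by omega⟩ : Fin (n+1)) (univ.filter (fun j : Fin (n+1) => (j:ℕ) ≤ k)) := by
        ext j
        simp [Fin.ext_iff]
        omega
      rw [hset, Finset.sum_insert (by simp), ih (by omega), hgs k h]
      ring
  -- main computation
  rw [Fintype.sum_prod_type]
  have inner : ∀ j : Fin (n+1),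
      ∑ l, ASF i (j, l) * cFvec (j, l)
        = (if j ≤ i then Δc j else 0) * (g j + Δc j * (1/2)) := by
    intro j
    have : ∀ l, ASF i (j, l) * cFvec (j, l)
        = (if j ≤ i then Δc j else 0) * (bF l * g j + (bF l * cF l) * Δc j) := by
      intro l
      rw [hASF, hcF, hΔC]
      simp only
      ring
    rw [Finset.sum_congr rfl (fun l _ => this l), ← Finset.mul_sum]
    congr 1
    rw [Finset.sum_add_distrib, ← Finset.sum_mul, ← Finset.sum_mul, hb1, hbc]
    ring
  rw [Finset.sum_congr rfl (fun j _ => inner j)]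
  have : ∑ j : Fin (n+1), (if j ≤ i then Δc j else 0) * (g j + Δc j * (1/2))
      = ∑ j ∈ univ.filter (fun j : Fin (n+1) => (j:ℕ) ≤ (i:ℕ)), (1/2) * (c j^2 - g j^2) := by
    rw [Finset.sum_filter]
    apply Finset.sum_congr rfl
    intro j _
    by_cases hji : j ≤ i
    · rw [if_pos hji, if_pos (Fin.le_def.mp hji), hΔ]
      ring
    · rw [if_neg hji, if_neg (fun hh => hji (Fin.le_def.mpr hh))]
      simp
  rw [this, ← Finset.mul_sum, key (i:ℕ) (by omega)]
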